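/- For every ℝ-linear isometric bijection f : ℍ → ℍ with determinant 1 (i.e., every element of SO(4) acting on ℍ ≅ ℝ⁴), there exist unit quaternions p and q such that f(h) = p h q⁻¹ for every quaternion h. In other words, the group homomorphism Φ : S³ × S³ → SO(4), (p,q) ↦ Φ_{p,q}, is surjective. -/

import Mathlib

open Quaternion
open scoped Quaternion RealInnerProductSpace

namespace Stmt2Aux

lemma normSq_of_norm_one {w : ℍ[ℝ]} (hw : ‖w‖ = 1) : normSq w = 1 := by
  have := Quaternion.normSq_eq_norm_mul_self (a := w)
  rw [hw] at this; simpa using this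

lemma refl_formula {w : ℍ[ℝ]} (hw : ‖w‖ = 1) (h : ℍ[ℝ]) :
    (Submodule.reflection (ℝ ∙ w)ᗮ : ℍ[ℝ] ≃ₗᵢ[ℝ] ℍ[ℝ]) h = -(w * star h * w) := by
  rw [Submodule.reflection_orthogonal_apply, Submodule.reflection_singleton_apply, hw]
  have h1 : w * star h * w = ((2 * (w * star h).re : ℝ) : ℍ[ℝ]) * w - h := by
    rw [← Quaternion.self_add_star' (w * star h)]
    rw [star_mul, star_star]
    rw [add_mul, mul_assoc h (star w) w, Quaternion.star_mul_self,
      normSq_of_norm_one hw]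
    simp [Quaternion.coe_one]
  rw [h1, Quaternion.coe_mul_eq_smul, Quaternion.inner_def]
  norm_num
  simp [two_mul, smul_add, add_smul]

noncomputable def qb : Module.Basis (Fin 4) ℝ ℍ[ℝ] := QuaternionAlgebra.basisOneIJK (-1) 0 (-1)

lemma qb_repr (x : ℍ[ℝ]) : ⇑(qb.repr x) = ![x.re, x.imI, x.imJ, x.imK] :=
  QuaternionAlgebra.coe_basisOneIJK_repr (-1) 0 (-1) x

lemma qb_mk (m : Fin 4) (x : ℍ[ℝ])
    (hx : (![x.re, x.imI, x.imJ, x.imK] : Fin 4 → ℝ) = fun i => if i = m then 1 else 0) :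
    qb m = x := by
  apply qb.repr.injective
  ext i
  rw [show qb.repr x = (QuaternionAlgebra.basisOneIJK (-1:ℝ) 0 (-1)).repr x from rfl]
  have := congrFun (QuaternionAlgebra.coe_basisOneIJK_repr (-1:ℝ) 0 (-1) x) i
  rw [this, hx, Module.Basis.repr_self]
  simp [Finsupp.single_apply, eq_comm]

lemma qb0 : qb 0 = ⟨1,0,0,0⟩ := by apply qb_mk; ext i; fin_cases i <;> simp
lemma qb1 : qb 1 = ⟨0,1,0,0⟩ := by apply qb_mk; ext i; fin_cases i <;> simp
lemma qb2 : qb 2 = ⟨0,0,1,0⟩ := by apply qb_mk; ext i; fin_cases i <;> simp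
lemma qb3 : qb 3 = ⟨0,0,0,1⟩ := by apply qb_mk; ext i; fin_cases i <;> simp

lemma qb_re (j : Fin 4) : (qb j).re = Finsupp.single j (1:ℝ) 0 := by
  have := congrFun (qb_repr (qb j)) 0
  rw [qb.repr_self] at this
  simpa using this.symm

lemma qb_imI (j : Fin 4) : (qb j).imI = Finsupp.single j (1:ℝ) 1 := by
  have := congrFun (qb_repr (qb j)) 1
  rw [qb.repr_self] at this
  simpa using this.symm

lemma qb_imJ (j : Fin 4) : (qb j).imJ = Finsupp.single j (1:ℝ) 2 := by
  have := congrFun (qb_repr (qb j)) 2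
  rw [qb.repr_self] at this
  simpa using this.symm

lemma qb_imK (j : Fin 4) : (qb j).imK = Finsupp.single j (1:ℝ) 3 := by
  have := congrFun (qb_repr (qb j)) 3
  rw [qb.repr_self] at this
  simpa using this.symm

lemma castSucc_two : (Fin.castSucc 2 : Fin 4) = 2 := rfl

lemma det_fin_four' (A : Matrix (Fin 4) (Fin 4) ℝ) (a b c d e f g h i j k l m n o p : ℝ)
    (hA : A = !![a,b,c,d; e,f,g,h; i,j,k,l; m,n,o,p]) :
    A.det = a*(f*(k*p - l*o) - g*(j*p - l*n) + h*(j*o - k*n))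
          - b*(e*(k*p - l*o) - g*(i*p - l*m) + h*(i*o - k*m))
          + c*(e*(j*p - l*n) - f*(i*p - l*m) + h*(i*n - j*m))
          - d*(e*(j*o - k*n) - f*(i*o - k*m) + g*(i*n - j*m)) := by
  subst hA
  simp [Matrix.det_succ_row_zero, Fin.sum_univ_succ, Fin.succAbove, castSucc_two]
  ring

def starlm : ℍ[ℝ] →ₗ[ℝ] ℍ[ℝ] where
  toFun := star
  map_add' := star_add
  map_smul' r x := by simp

lemma det_starlm : LinearMap.det starlm = -1 := by
  rw [← LinearMap.det_toMatrix qb]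
  rw [det_fin_four' _ 1 0 0 0 0 (-1) 0 0 0 0 (-1) 0 0 0 0 (-1) ?_]
  · norm_num
  · ext i j
    fin_cases i <;> fin_cases j <;>
      simp [LinearMap.toMatrix_apply, qb_repr, qb_re, qb_imI, qb_imJ, qb_imK, Finsupp.single_apply, starlm, Matrix.vecHead, Matrix.vecTail,
        QuaternionAlgebra.re_star, QuaternionAlgebra.imI_star, QuaternionAlgebra.imJ_star,
        QuaternionAlgebra.imK_star]

lemma det_mulLeft (p : ℍ[ℝ]) : LinearMap.det (LinearMap.mulLeft ℝ p) = normSq p ^ 2 := by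
  rw [← LinearMap.det_toMatrix qb]
  rw [det_fin_four' _ p.re (-p.imI) (-p.imJ) (-p.imK) p.imI p.re (-p.imK) p.imJ
      p.imJ p.imK p.re (-p.imI) p.imK (-p.imJ) p.imI p.re ?_]
  · rw [Quaternion.normSq_def']; ring
  · ext i j
    fin_cases i <;> fin_cases j <;>
      simp [LinearMap.toMatrix_apply, qb_repr, qb_re, qb_imI, qb_imJ, qb_imK, Finsupp.single_apply, Quaternion.re_mul, LinearMap.mulLeft_apply,
          LinearMap.mulRight_apply, QuaternionAlgebra.re_mul, QuaternionAlgebra.imI_mul, QuaternionAlgebra.imJ_mul,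
          QuaternionAlgebra.imK_mul,
        Quaternion.imI_mul, Quaternion.imJ_mul, Quaternion.imK_mul]

lemma det_mulRight (q : ℍ[ℝ]) : LinearMap.det (LinearMap.mulRight ℝ q) = normSq q ^ 2 := by
  rw [← LinearMap.det_toMatrix qb]
  rw [det_fin_four' _ q.re (-q.imI) (-q.imJ) (-q.imK) q.imI q.re q.imK (-q.imJ)
      q.imJ (-q.imK) q.re q.imI q.imK q.imJ (-q.imI) q.re ?_]
  · rw [Quaternion.normSq_def']; ring
  · ext i j
    fin_cases i <;> fin_cases j <;>
      simp [LinearMap.toMatrix_apply, qb_repr, qb_re, qb_imI, qb_imJ, qb_imK, Finsupp.single_apply, Quaternion.re_mul, LinearMap.mulLeft_apply,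
          LinearMap.mulRight_apply, QuaternionAlgebra.re_mul, QuaternionAlgebra.imI_mul, QuaternionAlgebra.imJ_mul,
          QuaternionAlgebra.imK_mul,
        Quaternion.imI_mul, Quaternion.imJ_mul, Quaternion.imK_mul]

lemma key (l : List ℍ[ℝ]) :
    (∃ p q : ℍ[ℝ], ‖p‖ = 1 ∧ ‖q‖ = 1 ∧ ∀ h : ℍ[ℝ],
      ((l.map fun v => Submodule.reflection (ℝ ∙ v)ᗮ).prod : ℍ[ℝ] ≃ₗᵢ[ℝ] ℍ[ℝ]) h = p * h * q) ∨
    (∃ p q : ℍ[ℝ], ‖p‖ = 1 ∧ ‖q‖ = 1 ∧ ∀ h : ℍ[ℝ],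
      ((l.map fun v => Submodule.reflection (ℝ ∙ v)ᗮ).prod : ℍ[ℝ] ≃ₗᵢ[ℝ] ℍ[ℝ]) h = p * star h * q) := by
  induction l with
  | nil => exact Or.inl ⟨1, 1, norm_one, norm_one, fun h => by simp⟩
  | cons v l ih =>
    have hcons : ∀ h : ℍ[ℝ],
        (((v::l).map fun v => Submodule.reflection (ℝ ∙ v)ᗮ).prod : ℍ[ℝ] ≃ₗᵢ[ℝ] ℍ[ℝ]) h =
          Submodule.reflection (ℝ ∙ v)ᗮ (((l.map fun v => Submodule.reflection (ℝ ∙ v)ᗮ).prod : ℍ[ℝ] ≃ₗᵢ[ℝ] ℍ[ℝ]) h) := by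
      intro h
      rw [List.map_cons, List.prod_cons]
      rfl
    by_cases hv : v = 0
    · have hid : ∀ x : ℍ[ℝ], Submodule.reflection (ℝ ∙ v)ᗮ x = x := by
        intro x
        apply Submodule.reflection_mem_subspace_eq_self
        rw [hv, Submodule.span_zero_singleton, Submodule.bot_orthogonal_eq_top]
        trivial
      rcases ih with ⟨p, q, hp, hq, hf⟩ | ⟨p, q, hp, hq, hf⟩
      · exact Or.inl ⟨p, q, hp, hq, fun h => by rw [hcons, hid, hf]⟩
      · exact Or.inr ⟨p, q, hp, hq, fun h => by rw [hcons, hid, hf]⟩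
    · set w : ℍ[ℝ] := ‖v‖⁻¹ • v with hwdef
      have hw : ‖w‖ = 1 := by
        rw [hwdef, norm_smul, norm_inv, norm_norm]
        exact inv_mul_cancel₀ (norm_ne_zero_iff.2 hv)
      have hspan : (ℝ ∙ v) = ℝ ∙ w := by
        rw [hwdef]
        exact (Submodule.span_singleton_smul_eq
          (isUnit_iff_ne_zero.2 (inv_ne_zero (norm_ne_zero_iff.2 hv))) v).symm
      have hrefl : ∀ x : ℍ[ℝ], Submodule.reflection (ℝ ∙ v)ᗮ x = -(w * star x * w) := by
        intro x; simp only [hspan]; exact refl_formula hw x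
      rcases ih with ⟨p, q, hp, hq, hf⟩ | ⟨p, q, hp, hq, hf⟩
      · refine Or.inr ⟨-(w * star q), star p * w, ?_, ?_, ?_⟩
        · rw [norm_neg, norm_mul, Quaternion.norm_star, hw, hq, one_mul]
        · rw [norm_mul, Quaternion.norm_star, hw, hp, one_mul]
        · intro h
          rw [hcons, hf, hrefl]
          simp only [star_mul, star_star, neg_mul, mul_assoc]
      · refine Or.inl ⟨-(w * star q), star p * w, ?_, ?_, ?_⟩
        · rw [norm_neg, norm_mul, Quaternion.norm_star, hw, hq, one_mul]
        · rw [norm_mul, Quaternion.norm_star, hw, hp, one_mul]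
        · intro h
          rw [hcons, hf, hrefl]
          simp only [star_mul, star_star, neg_mul, mul_assoc]

end Stmt2Aux

open Stmt2Aux

/-- Every ℝ-linear isometric bijection of the quaternions with determinant `1` (i.e. every
element of `SO(4)` acting on `ℍ ≅ ℝ⁴`) is of the form `h ↦ p * h * q⁻¹` for some unit
quaternions `p` and `q`: the homomorphism `Φ : S³ × S³ → SO(4)` is surjective. -/
theorem stmt2 (f : ℍ[ℝ] ≃ₗᵢ[ℝ] ℍ[ℝ])
    (hdet : LinearMap.det (f.toLinearEquiv.toLinearMap) = 1) :
    ∃ p q : ℍ[ℝ], ‖p‖ = 1 ∧ ‖q‖ = 1 ∧ ∀ h : ℍ[ℝ], f h = p * h * q⁻¹ := by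
  obtain ⟨l, -, hl⟩ := f.reflections_generate_dim
  rcases key l with ⟨p, q, hp, hq, hf⟩ | ⟨p, q, hp, hq, hf⟩
  · refine ⟨p, q⁻¹, hp, by rw [norm_inv, hq]; norm_num, fun h => ?_⟩
    rw [hl, hf, inv_inv]
  · exfalso
    have h1 : f.toLinearEquiv.toLinearMap =
        (LinearMap.mulLeft ℝ p) ∘ₗ (LinearMap.mulRight ℝ q) ∘ₗ starlm := by
      apply LinearMap.ext
      intro h
      have : f h = p * star h * q := by rw [hl, hf]
      simpa [starlm, mul_assoc] using this
    rw [h1, LinearMap.det_comp, LinearMap.det_comp, det_mulLeft, det_mulRight, det_starlm,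
      normSq_of_norm_one hp, normSq_of_norm_one hq] at hdet
    norm_num at hdet
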